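/- Let k₁₂, k₂₁, k₂₃, k₃₂, k₃₁, k₁₃ ∈ ℝ and define the linear vector field v⁽⁰⁾ : ℝ³ → ℝ³ by v⁽⁰⁾₁(x) = −(k₁₂ − k₂₁)x₁ + (k₃₁ − k₁₃)x₃, v⁽⁰⁾₂(x) = −(k₂₃ − k₃₂)x₂ + (k₁₂ − k₂₁)x₁, v⁽⁰⁾₃(x) = −(k₃₁ − k₁₃)x₃ + (k₂₃ − k₃₂)x₂. Then there exist a ∈ ℝ³ and a symmetric 3 × 3 real matrix Q such that, with H₁(x) = ⟨a, x⟩, H₂(x) = ½|x|², and S(x) = ½⟨x, Q x⟩, one has v⁽⁰⁾(x) = ∇H₁(x) × ∇H₂(x) + ∇S(x) for all x ∈ ℝ³. In particular the detailed-balance-violating zeroth-order term of the triangular reaction admits a Nambu-plus-gradient decomposition with the geometric conserved quantity H₂ = ½(x₁² + x₂² + x₃²). -/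

import Mathlib

open Matrix

infixl:74 " ×₃ " => crossProduct

/-- Partial-derivative gradient of `f : ℝ³ → ℝ` at `x`. -/
noncomputable def grad (f : (Fin 3 → ℝ) → ℝ) (x : Fin 3 → ℝ) : Fin 3 → ℝ :=
  fun i => fderiv ℝ f x (Pi.single i 1)

noncomputable def P (i : Fin 3) : (Fin 3 → ℝ) →L[ℝ] ℝ := ContinuousLinearMap.proj i

lemma hP (x : Fin 3 → ℝ) (i : Fin 3) : HasFDerivAt (fun y : Fin 3 → ℝ => y i) (P i) x :=
  (ContinuousLinearMap.proj (R := ℝ) (φ := fun _ : Fin 3 => ℝ) i).hasFDerivAt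

lemma grad_eq {f : (Fin 3 → ℝ) → ℝ} {c0 c1 c2 : ℝ} {x : Fin 3 → ℝ}
    (h : HasFDerivAt f (c0 • P 0 + c1 • P 1 + c2 • P 2) x) :
    grad f x = ![c0, c1, c2] := by
  funext i
  simp only [grad, h.fderiv]
  fin_cases i <;>
    simp [P, ContinuousLinearMap.proj_apply, Pi.single_apply]

lemma grad_lin (a x : Fin 3 → ℝ) : grad (fun y => a ⬝ᵥ y) x = ![a 0, a 1, a 2] := by
  apply grad_eq
  have e : (fun y : Fin 3 → ℝ => a ⬝ᵥ y) = fun y => a 0 * y 0 + a 1 * y 1 + a 2 * y 2 := by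
    funext y; simp [dotProduct, Fin.sum_univ_three]
  rw [e]
  exact (((hP x 0).const_mul (a 0)).add ((hP x 1).const_mul (a 1))).add ((hP x 2).const_mul (a 2))

lemma grad_norm (x : Fin 3 → ℝ) :
    grad (fun y => (1 / 2) * (y ⬝ᵥ y)) x = ![x 0, x 1, x 2] := by
  apply grad_eq
  have e : (fun y : Fin 3 → ℝ => (1 / 2) * (y ⬝ᵥ y)) =
      fun y => (1 / 2) * (y 0 * y 0 + y 1 * y 1 + y 2 * y 2) := by
    funext y; simp [dotProduct, Fin.sum_univ_three]
  rw [e]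
  have h := ((((hP x 0).mul (hP x 0)).add ((hP x 1).mul (hP x 1))).add
      ((hP x 2).mul (hP x 2))).const_mul (1 / 2 : ℝ)
  convert h using 1
  iterate 6 rfl
  ext y
  simp [P]
  ring

lemma grad_quad (Q : Matrix (Fin 3) (Fin 3) ℝ) (x : Fin 3 → ℝ) :
    grad (fun y => (1 / 2) * (y ⬝ᵥ Q.mulVec y)) x =
      ![(1/2) * ((Q.mulVec x) 0 + (Qᵀ.mulVec x) 0),
        (1/2) * ((Q.mulVec x) 1 + (Qᵀ.mulVec x) 1),
        (1/2) * ((Q.mulVec x) 2 + (Qᵀ.mulVec x) 2)] := by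
  apply grad_eq
  have e : (fun y : Fin 3 → ℝ => (1 / 2) * (y ⬝ᵥ Q.mulVec y)) =
      fun y => (1 / 2) *
        (Q 0 0 * (y 0 * y 0) + Q 0 1 * (y 0 * y 1) + Q 0 2 * (y 0 * y 2)
          + Q 1 0 * (y 1 * y 0) + Q 1 1 * (y 1 * y 1) + Q 1 2 * (y 1 * y 2)
          + Q 2 0 * (y 2 * y 0) + Q 2 1 * (y 2 * y 1) + Q 2 2 * (y 2 * y 2)) := by
    funext y; simp [dotProduct, mulVec, Fin.sum_univ_three]; ring
  rw [e]
  have h := (((((((((((hP x 0).mul (hP x 0)).const_mul (Q 0 0)).add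
      (((hP x 0).mul (hP x 1)).const_mul (Q 0 1))).add
      (((hP x 0).mul (hP x 2)).const_mul (Q 0 2))).add
      (((hP x 1).mul (hP x 0)).const_mul (Q 1 0))).add
      (((hP x 1).mul (hP x 1)).const_mul (Q 1 1))).add
      (((hP x 1).mul (hP x 2)).const_mul (Q 1 2))).add
      (((hP x 2).mul (hP x 0)).const_mul (Q 2 0))).add
      (((hP x 2).mul (hP x 1)).const_mul (Q 2 1))).add
      (((hP x 2).mul (hP x 2)).const_mul (Q 2 2))).const_mul (1 / 2 : ℝ)
  convert h using 1
  iterate 6 rfl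
  ext y
  simp [P, mulVec, dotProduct, Fin.sum_univ_three, Matrix.transpose_apply]
  ring

/-- the zeroth-order (detailed-balance-violating) term `v⁽⁰⁾` of
the triangular reaction admits a Nambu-plus-gradient decomposition: there exist
`a ∈ ℝ³` and a symmetric matrix `Q` such that, with `H₁(x) = ⟨a, x⟩`,
`H₂(x) = ½|x|²` and `S(x) = ½⟨x, Q x⟩`, one has
`v⁽⁰⁾(x) = ∇H₁(x) × ∇H₂(x) + ∇S(x)` for all `x`; in particular the geometric
conserved quantity is `H₂ = ½(x₁² + x₂² + x₃²)`. -/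
theorem triangular_zeroth_order_nambu_decomposition
    (k₁₂ k₂₁ k₂₃ k₃₂ k₃₁ k₁₃ : ℝ) :
    ∃ (a : Fin 3 → ℝ) (Q : Matrix (Fin 3) (Fin 3) ℝ), Q.IsSymm ∧
      ∀ x : Fin 3 → ℝ,
        (![-(k₁₂ - k₂₁) * x 0 + (k₃₁ - k₁₃) * x 2,
           -(k₂₃ - k₃₂) * x 1 + (k₁₂ - k₂₁) * x 0,
           -(k₃₁ - k₁₃) * x 2 + (k₂₃ - k₃₂) * x 1] : Fin 3 → ℝ) =
          grad (fun y => a ⬝ᵥ y) x ×₃ grad (fun y => (1 / 2) * (y ⬝ᵥ y)) x +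
            grad (fun y => (1 / 2) * (y ⬝ᵥ Q.mulVec y)) x := by
  set α := k₁₂ - k₂₁ with hα
  set β := k₂₃ - k₃₂ with hβ
  set γ := k₃₁ - k₁₃ with hγ
  refine ⟨![β/2, γ/2, α/2], !![-α, α/2, γ/2; α/2, -β, β/2; γ/2, β/2, -γ], ?_, ?_⟩
  · ext i j; fin_cases i <;> fin_cases j <;> simp [Matrix.transpose_apply]
  · intro x
    rw [grad_lin, grad_norm, grad_quad]
    funext i
    fin_cases i <;>
      simp [crossProduct, mulVec, dotProduct, Fin.sum_univ_three,
        Matrix.transpose_apply] <;> ring
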